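/- For all n ≥ 1, the number of permutations of length n avoiding {231, 312, 1432} equals the number of permutations of length n avoiding {231, 312, 4321, 21543} (an unbalanced Wilf-equivalence). -/

import Mathlib

open Finset MvPolynomial
open scoped Classical

/-- `π` contains the pattern given by the list `p` (one-line notation). -/
def ContainsPat {n : ℕ} (π : Equiv.Perm (Fin n)) (p : List ℕ) : Prop :=
  ∃ f : Fin p.length → Fin n, StrictMono f ∧
    ∀ i j : Fin p.length, p.get i < p.get j ↔ π (f i) < π (f j)

/-- `π` avoids every pattern in the list `S`. -/
def AvoidsAll {n : ℕ} (π : Equiv.Perm (Fin n)) (S : List (List ℕ)) : Prop :=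
  ∀ p ∈ S, ¬ ContainsPat π p

/-- Fibonacci numbers with the convention `F 0 = F 1 = 1`. -/
def fib' : ℕ → ℕ
  | 0 => 1
  | 1 => 1
  | n + 2 => fib' (n + 1) + fib' n

/-- number of inversions -/
def invNum {n : ℕ} (π : Equiv.Perm (Fin n)) : ℕ :=
  (Finset.univ.filter (fun p : Fin n × Fin n => p.1 < p.2 ∧ π p.2 < π p.1)).card

/-- The last `k` entries of `π` contain pattern `p`. -/
def SegContainsPat {n : ℕ} (π : Equiv.Perm (Fin n)) (k : ℕ) (p : List ℕ) : Prop :=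
  ∃ f : Fin p.length → Fin n, StrictMono f ∧ (∀ i, n - k ≤ ((f i : Fin n) : ℕ)) ∧
    ∀ i j : Fin p.length, p.get i < p.get j ↔ π (f i) < π (f j)

/-- The last `k` entries of `π` are the top `k` values and form a Fibonacci permutation. -/
def IsFinalFib {n : ℕ} (π : Equiv.Perm (Fin n)) (k : ℕ) : Prop :=
  k ≤ n ∧ (∀ i : Fin n, n - k ≤ (i : ℕ) → n - k ≤ ((π i : Fin n) : ℕ)) ∧
    ∀ p ∈ [[2,3,1],[3,1,2],[3,2,1]], ¬ SegContainsPat π k p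

/-- `Fib(π)`: length of the longest final segment of `π` consisting of the top values
and avoiding 231, 312, 321. -/
noncomputable def fibStat {n : ℕ} (π : Equiv.Perm (Fin n)) : ℕ := sSup {k | IsFinalFib π k}

/-- direct sum `π ⊕ σ` -/
def dsum {m n : ℕ} (π : Equiv.Perm (Fin m)) (σ : Equiv.Perm (Fin n)) :
    Equiv.Perm (Fin (m + n)) :=
  finSumFinEquiv.symm.trans ((Equiv.sumCongr π σ).trans finSumFinEquiv)

/-- skew sum `π ⊖ σ` -/
def sskew {m n : ℕ} (π : Equiv.Perm (Fin m)) (σ : Equiv.Perm (Fin n)) :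
    Equiv.Perm (Fin (m + n)) :=
  finSumFinEquiv.symm.trans ((Equiv.sumCongr π σ).trans
    ((Equiv.sumComm (Fin m) (Fin n)).trans (finSumFinEquiv.trans (finCongr (Nat.add_comm n m)))))

/-- the pattern 321 as a permutation of `Fin 3` -/
def perm321 : Equiv.Perm (Fin 3) := Fin.revPerm

/-- the pattern 312 as a permutation of `Fin 3` -/
def perm312 : Equiv.Perm (Fin 3) := (finRotate 3)⁻¹

/-- binomial coefficient on ℤ, zero when undefined -/
def C (a b : ℤ) : ℤ := if 0 ≤ b ∧ b ≤ a then (a.toNat.choose b.toNat : ℤ) else 0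

/-- generating function `G_n(v,q)` with `v = X 0`, `q = X 1` -/
noncomputable def G (n : ℕ) (S : List (List ℕ)) : MvPolynomial (Fin 2) ℤ :=
  ∑ π ∈ Finset.univ.filter (fun π : Equiv.Perm (Fin n) => AvoidsAll π S),
    X 0 ^ fibStat π * X 1 ^ invNum π

/-- Fibonacci generating function `F_n(q)` with `q = X 1` -/
noncomputable def Fq (n : ℕ) : MvPolynomial (Fin 2) ℤ :=
  ∑ π ∈ Finset.univ.filter
      (fun π : Equiv.Perm (Fin n) => AvoidsAll π [[2,3,1],[3,1,2],[3,2,1]]),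
    X 1 ^ invNum π

section AuxLayered

variable {n : ℕ}

def pfun (π : Equiv.Perm (Fin n)) (i : ℕ) : ℕ :=
  if h : i < n then (π ⟨i, h⟩ : ℕ) else i

lemma pfun_def (π : Equiv.Perm (Fin n)) {i : ℕ} (h : i < n) : pfun π i = π ⟨i, h⟩ :=
  dif_pos h

lemma pfun_fin (π : Equiv.Perm (Fin n)) (i : Fin n) : pfun π i = π i := by
  rw [pfun_def π i.2, Fin.eta]

lemma pfun_lt (π : Equiv.Perm (Fin n)) {i : ℕ} (h : i < n) : pfun π i < n := by
  rw [pfun_def π h]; exact (π ⟨i, h⟩).2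

lemma pfun_big (π : Equiv.Perm (Fin n)) {i : ℕ} (h : ¬ i < n) : pfun π i = i := dif_neg h

lemma pfun_inj (π : Equiv.Perm (Fin n)) {i j : ℕ} (hij : pfun π i = pfun π j) : i = j := by
  unfold pfun at hij
  split_ifs at hij with h1 h2 h2
  · exact congrArg Fin.val (Fin.mk.injEq _ _ _ _ ▸ π.injective (Fin.ext hij) : (⟨i,h1⟩ : Fin n) = ⟨j,h2⟩)
  · exact absurd (hij ▸ (π ⟨i, h1⟩).2) h2
  · exact absurd (hij ▸ (π ⟨j, h2⟩).2) (by omega)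
  · exact hij

lemma pfun_surj (π : Equiv.Perm (Fin n)) {v : ℕ} (hv : v < n) : ∃ i, i < n ∧ pfun π i = v := by
  refine ⟨π.symm ⟨v, hv⟩, (π.symm ⟨v, hv⟩).2, ?_⟩
  rw [pfun_fin]; simp

def ff3 {α : Sort*} (x y z : α) {m : ℕ} : Fin m → α :=
  fun i => if (i : ℕ) = 0 then x else if (i : ℕ) = 1 then y else z

def ff4 {α : Sort*} (x y z w : α) {m : ℕ} : Fin m → α :=
  fun i => if (i : ℕ) = 0 then x else if (i : ℕ) = 1 then y else if (i : ℕ) = 2 then z else w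

def ff5 {α : Sort*} (x y z w u : α) {m : ℕ} : Fin m → α :=
  fun i => if (i : ℕ) = 0 then x else if (i : ℕ) = 1 then y else if (i : ℕ) = 2 then z
    else if (i : ℕ) = 3 then w else u

lemma contains231_iff (π : Equiv.Perm (Fin n)) :
    ContainsPat π [2,3,1] ↔ ∃ a b c : ℕ, a < b ∧ b < c ∧ c < n ∧
      pfun π c < pfun π a ∧ pfun π a < pfun π b := by
  constructor
  · rintro ⟨f, hm, hiff⟩
    refine ⟨f ⟨0, by decide⟩, f ⟨1, by decide⟩, f ⟨2, by decide⟩,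
      hm (by decide), hm (by decide), (f ⟨2, by decide⟩).2, ?_, ?_⟩ <;>
      rw [pfun_fin, pfun_fin]
    · exact (hiff ⟨2, by decide⟩ ⟨0, by decide⟩).1 (by decide)
    · exact (hiff ⟨0, by decide⟩ ⟨1, by decide⟩).1 (by decide)
  · rintro ⟨a, b, c, hab, hbc, hcn, h1, h2⟩
    have ha : a < n := by omega
    have hb : b < n := by omega
    rw [pfun_def π ha] at h1 h2
    rw [pfun_def π hb] at h2
    rw [pfun_def π hcn] at h1
    refine ⟨ff3 ⟨a, ha⟩ ⟨b, hb⟩ ⟨c, hcn⟩, ?_, ?_⟩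
    · intro i j hij
      obtain ⟨iv, hi⟩ := i; obtain ⟨jv, hj⟩ := j
      rw [Fin.lt_def] at hij ⊢
      simp only [List.length_cons, List.length_nil] at hi hj
      simp only [Fin.val_mk] at hij
      interval_cases iv <;> interval_cases jv <;> simp [ff3] <;> omega
    · intro i j
      obtain ⟨iv, hi⟩ := i; obtain ⟨jv, hj⟩ := j
      rw [Fin.lt_def]
      simp only [List.length_cons, List.length_nil] at hi hj
      interval_cases iv <;> interval_cases jv <;>
        (simp [ff3, List.get_eq_getElem, Fin.val_mk, show ((2 : Fin (0+1+1+1)) : ℕ) = 2 by rfl]; try omega)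

lemma contains312_iff (π : Equiv.Perm (Fin n)) :
    ContainsPat π [3,1,2] ↔ ∃ a b c : ℕ, a < b ∧ b < c ∧ c < n ∧
      pfun π b < pfun π c ∧ pfun π c < pfun π a := by
  constructor
  · rintro ⟨f, hm, hiff⟩
    refine ⟨f ⟨0, by decide⟩, f ⟨1, by decide⟩, f ⟨2, by decide⟩,
      hm (by decide), hm (by decide), (f ⟨2, by decide⟩).2, ?_, ?_⟩ <;>
      rw [pfun_fin, pfun_fin]
    · exact (hiff ⟨1, by decide⟩ ⟨2, by decide⟩).1 (by decide)
    · exact (hiff ⟨2, by decide⟩ ⟨0, by decide⟩).1 (by decide)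
  · rintro ⟨a, b, c, hab, hbc, hcn, h1, h2⟩
    have ha : a < n := by omega
    have hb : b < n := by omega
    rw [pfun_def π hb] at h1
    rw [pfun_def π hcn] at h1 h2
    rw [pfun_def π ha] at h2
    refine ⟨ff3 ⟨a, ha⟩ ⟨b, hb⟩ ⟨c, hcn⟩, ?_, ?_⟩
    · intro i j hij
      obtain ⟨iv, hi⟩ := i; obtain ⟨jv, hj⟩ := j
      rw [Fin.lt_def] at hij ⊢
      simp only [List.length_cons, List.length_nil] at hi hj
      simp only [Fin.val_mk] at hij
      interval_cases iv <;> interval_cases jv <;> simp [ff3] <;> omega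
    · intro i j
      obtain ⟨iv, hi⟩ := i; obtain ⟨jv, hj⟩ := j
      rw [Fin.lt_def]
      simp only [List.length_cons, List.length_nil] at hi hj
      interval_cases iv <;> interval_cases jv <;>
        (simp [ff3, List.get_eq_getElem, Fin.val_mk, show ((2 : Fin (0+1+1+1)) : ℕ) = 2 by rfl]; try omega)

lemma contains1432_iff (π : Equiv.Perm (Fin n)) :
    ContainsPat π [1,4,3,2] ↔ ∃ a b c d : ℕ, a < b ∧ b < c ∧ c < d ∧ d < n ∧
      pfun π a < pfun π d ∧ pfun π d < pfun π c ∧ pfun π c < pfun π b := by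
  constructor
  · rintro ⟨f, hm, hiff⟩
    refine ⟨f ⟨0, by decide⟩, f ⟨1, by decide⟩, f ⟨2, by decide⟩, f ⟨3, by decide⟩,
      hm (by decide), hm (by decide), hm (by decide), (f ⟨3, by decide⟩).2, ?_, ?_, ?_⟩ <;>
      rw [pfun_fin, pfun_fin]
    · exact (hiff ⟨0, by decide⟩ ⟨3, by decide⟩).1 (by decide)
    · exact (hiff ⟨3, by decide⟩ ⟨2, by decide⟩).1 (by decide)
    · exact (hiff ⟨2, by decide⟩ ⟨1, by decide⟩).1 (by decide)
  · rintro ⟨a, b, c, d, hab, hbc, hcd, hdn, h1, h2, h3⟩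
    have ha : a < n := by omega
    have hb : b < n := by omega
    have hc : c < n := by omega
    rw [pfun_def π ha] at h1
    rw [pfun_def π hdn] at h1 h2
    rw [pfun_def π hc] at h2 h3
    rw [pfun_def π hb] at h3
    refine ⟨ff4 ⟨a, ha⟩ ⟨b, hb⟩ ⟨c, hc⟩ ⟨d, hdn⟩, ?_, ?_⟩
    · intro i j hij
      obtain ⟨iv, hi⟩ := i; obtain ⟨jv, hj⟩ := j
      rw [Fin.lt_def] at hij ⊢
      simp only [List.length_cons, List.length_nil] at hi hj
      simp only [Fin.val_mk] at hij
      interval_cases iv <;> interval_cases jv <;> simp [ff4] <;> omega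
    · intro i j
      obtain ⟨iv, hi⟩ := i; obtain ⟨jv, hj⟩ := j
      rw [Fin.lt_def]
      simp only [List.length_cons, List.length_nil] at hi hj
      interval_cases iv <;> interval_cases jv <;>
        (simp [ff4, List.get_eq_getElem, Fin.val_mk, show ((3 : Fin (0+1+1+1+1)) : ℕ) = 3 by rfl]; try omega)

lemma contains4321_iff (π : Equiv.Perm (Fin n)) :
    ContainsPat π [4,3,2,1] ↔ ∃ a b c d : ℕ, a < b ∧ b < c ∧ c < d ∧ d < n ∧
      pfun π d < pfun π c ∧ pfun π c < pfun π b ∧ pfun π b < pfun π a := by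
  constructor
  · rintro ⟨f, hm, hiff⟩
    refine ⟨f ⟨0, by decide⟩, f ⟨1, by decide⟩, f ⟨2, by decide⟩, f ⟨3, by decide⟩,
      hm (by decide), hm (by decide), hm (by decide), (f ⟨3, by decide⟩).2, ?_, ?_, ?_⟩ <;>
      rw [pfun_fin, pfun_fin]
    · exact (hiff ⟨3, by decide⟩ ⟨2, by decide⟩).1 (by decide)
    · exact (hiff ⟨2, by decide⟩ ⟨1, by decide⟩).1 (by decide)
    · exact (hiff ⟨1, by decide⟩ ⟨0, by decide⟩).1 (by decide)
  · rintro ⟨a, b, c, d, hab, hbc, hcd, hdn, h1, h2, h3⟩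
    have ha : a < n := by omega
    have hb : b < n := by omega
    have hc : c < n := by omega
    rw [pfun_def π hdn] at h1
    rw [pfun_def π hc] at h1 h2
    rw [pfun_def π hb] at h2 h3
    rw [pfun_def π ha] at h3
    refine ⟨ff4 ⟨a, ha⟩ ⟨b, hb⟩ ⟨c, hc⟩ ⟨d, hdn⟩, ?_, ?_⟩
    · intro i j hij
      obtain ⟨iv, hi⟩ := i; obtain ⟨jv, hj⟩ := j
      rw [Fin.lt_def] at hij ⊢
      simp only [List.length_cons, List.length_nil] at hi hj
      simp only [Fin.val_mk] at hij
      interval_cases iv <;> interval_cases jv <;> simp [ff4] <;> omega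
    · intro i j
      obtain ⟨iv, hi⟩ := i; obtain ⟨jv, hj⟩ := j
      rw [Fin.lt_def]
      simp only [List.length_cons, List.length_nil] at hi hj
      interval_cases iv <;> interval_cases jv <;>
        (simp [ff4, List.get_eq_getElem, Fin.val_mk, show ((3 : Fin (0+1+1+1+1)) : ℕ) = 3 by rfl]; try omega)

lemma contains21543_iff (π : Equiv.Perm (Fin n)) :
    ContainsPat π [2,1,5,4,3] ↔ ∃ a b c d e : ℕ, a < b ∧ b < c ∧ c < d ∧ d < e ∧ e < n ∧
      pfun π b < pfun π a ∧ pfun π a < pfun π e ∧ pfun π e < pfun π d ∧ pfun π d < pfun π c := by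
  constructor
  · rintro ⟨f, hm, hiff⟩
    refine ⟨f ⟨0, by decide⟩, f ⟨1, by decide⟩, f ⟨2, by decide⟩, f ⟨3, by decide⟩,
      f ⟨4, by decide⟩,
      hm (by decide), hm (by decide), hm (by decide), hm (by decide),
      (f ⟨4, by decide⟩).2, ?_, ?_, ?_, ?_⟩ <;>
      rw [pfun_fin, pfun_fin]
    · exact (hiff ⟨1, by decide⟩ ⟨0, by decide⟩).1 (by decide)
    · exact (hiff ⟨0, by decide⟩ ⟨4, by decide⟩).1 (by decide)
    · exact (hiff ⟨4, by decide⟩ ⟨3, by decide⟩).1 (by decide)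
    · exact (hiff ⟨3, by decide⟩ ⟨2, by decide⟩).1 (by decide)
  · rintro ⟨a, b, c, d, e, hab, hbc, hcd, hde, hen, h1, h2, h3, h4⟩
    have ha : a < n := by omega
    have hb : b < n := by omega
    have hc : c < n := by omega
    have hd : d < n := by omega
    rw [pfun_def π hb] at h1
    rw [pfun_def π ha] at h1 h2
    rw [pfun_def π hen] at h2 h3
    rw [pfun_def π hd] at h3 h4
    rw [pfun_def π hc] at h4
    refine ⟨ff5 ⟨a, ha⟩ ⟨b, hb⟩ ⟨c, hc⟩ ⟨d, hd⟩ ⟨e, hen⟩, ?_, ?_⟩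
    · intro i j hij
      obtain ⟨iv, hi⟩ := i; obtain ⟨jv, hj⟩ := j
      rw [Fin.lt_def] at hij ⊢
      simp only [List.length_cons, List.length_nil] at hi hj
      simp only [Fin.val_mk] at hij
      interval_cases iv <;> interval_cases jv <;> simp [ff5] <;> omega
    · intro i j
      obtain ⟨iv, hi⟩ := i; obtain ⟨jv, hj⟩ := j
      rw [Fin.lt_def]
      simp only [List.length_cons, List.length_nil] at hi hj
      interval_cases iv <;> interval_cases jv <;>
        (simp [ff5, List.get_eq_getElem, Fin.val_mk, show ((4 : Fin (0+1+1+1+1+1)) : ℕ) = 4 by rfl, show ((3 : Fin (0+1+1+1+1+1)) : ℕ) = 3 by rfl]; try omega)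

/-- descent at position i -/
def dsc (π : Equiv.Perm (Fin n)) (i : ℕ) : Prop := pfun π (i+1) < pfun π i

/-- the layered condition -/
def Cnd (π : Equiv.Perm (Fin n)) : Prop :=
  ∀ i j : ℕ, i < j → pfun π j < pfun π i → pfun π j + (j - i) = pfun π i

lemma dsc_lt {π : Equiv.Perm (Fin n)} {i : ℕ} (h : dsc π i) : i + 1 < n := by
  by_contra hc
  unfold dsc at h
  rcases Nat.lt_or_ge i n with hi | hi
  · rw [pfun_big π (by omega)] at h
    have := pfun_lt π hi; omega
  · rw [pfun_big π (by omega), pfun_big π (by omega)] at h; omega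

lemma not_dsc_last (π : Equiv.Perm (Fin n)) {i : ℕ} (h : n - 1 ≤ i) : ¬ dsc π i := by
  intro hd; have := dsc_lt hd; omega

lemma pfun_symm_apply (π : Equiv.Perm (Fin n)) {v : ℕ} (hv : v < n) :
    pfun π (pfun π.symm v) = v := by
  rw [pfun_def π.symm hv, pfun_fin]
  simp

lemma lt_n_of_pfun_lt {π : Equiv.Perm (Fin n)} {i j : ℕ} (hij : i < j)
    (h : pfun π j < pfun π i) : j < n := by
  by_contra hc
  rw [pfun_big π (by omega)] at h
  rcases Nat.lt_or_ge i n with hi | hi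
  · have := pfun_lt π hi; omega
  · rw [pfun_big π (by omega)] at h; omega

/-- avoiding 231 and 312 implies the layered condition -/
lemma cnd_of_avoids {π : Equiv.Perm (Fin n)}
    (h231 : ¬ ContainsPat π [2,3,1]) (h312 : ¬ ContainsPat π [3,1,2]) : Cnd π := by
  intro i j hij hval
  have hjn : j < n := lt_n_of_pfun_lt hij hval
  have hin : i < n := by omega
  have hmid : ∀ k, i < k → k < j → pfun π j < pfun π k ∧ pfun π k < pfun π i := by
    intro k hik hkj
    constructor
    · by_contra hc
      have hne : pfun π k ≠ pfun π j := fun he => by have := pfun_inj π he; omega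
      have : pfun π k < pfun π j := by omega
      exact h312 ((contains312_iff π).2 ⟨i, k, j, hik, hkj, hjn, this, hval⟩)
    · by_contra hc
      have hne : pfun π i ≠ pfun π k := fun he => by have := pfun_inj π he; omega
      have : pfun π i < pfun π k := by omega
      exact h231 ((contains231_iff π).2 ⟨i, k, j, hik, hkj, hjn, hval, this⟩)
  have hval' : ∀ v, pfun π j < v → v < pfun π i →
      i < pfun π.symm v ∧ pfun π.symm v < j := by
    intro v hv1 hv2
    have hvn : v < n := lt_of_lt_of_le hv2 (le_of_lt (pfun_lt π hin))
    set k := pfun π.symm v with hk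
    have hkn : k < n := pfun_lt π.symm hvn
    have hpk : pfun π k = v := pfun_symm_apply π hvn
    have hki : k ≠ i := fun he => by rw [he] at hpk; omega
    have hkj : k ≠ j := fun he => by rw [he] at hpk; omega
    constructor
    · by_contra hc
      have hlt : k < i := by omega
      exact h231 ((contains231_iff π).2 ⟨k, i, j, by omega, hij, hjn, by omega, by omega⟩)
    · by_contra hc
      have hlt : j < k := by omega
      exact h312 ((contains312_iff π).2 ⟨i, j, k, hij, by omega, hkn, by omega, by omega⟩)
  have hc1 : (Finset.Ioo i j).card ≤ (Finset.Ioo (pfun π j) (pfun π i)).card := by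
    apply Finset.card_le_card_of_injOn (pfun π)
    · intro k hk
      rw [Finset.mem_coe, Finset.mem_Ioo] at hk ⊢
      exact ⟨(hmid k hk.1 hk.2).1, (hmid k hk.1 hk.2).2⟩
    · intro a _ b _ he; exact pfun_inj π he
  have hc2 : (Finset.Ioo (pfun π j) (pfun π i)).card ≤ (Finset.Ioo i j).card := by
    apply Finset.card_le_card_of_injOn (pfun π.symm)
    · intro v hv
      rw [Finset.mem_coe, Finset.mem_Ioo] at hv ⊢
      exact hval' v hv.1 hv.2
    · intro a _ b _ he; exact pfun_inj π.symm he
  rw [Nat.card_Ioo, Nat.card_Ioo] at hc1 hc2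
  omega

/-- the layered condition implies avoiding 231 -/
lemma not_contains231 {π : Equiv.Perm (Fin n)} (h : Cnd π) : ¬ ContainsPat π [2,3,1] := by
  rw [contains231_iff]
  rintro ⟨a, b, c, hab, hbc, hcn, h1, h2⟩
  have e1 := h b c hbc (by omega)
  have e2 := h a c (by omega) h1
  omega

/-- the layered condition implies avoiding 312 -/
lemma not_contains312 {π : Equiv.Perm (Fin n)} (h : Cnd π) : ¬ ContainsPat π [3,1,2] := by
  rw [contains312_iff]
  rintro ⟨a, b, c, hab, hbc, hcn, h1, h2⟩
  have e1 := h a b hab (by omega)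
  have e2 := h a c (by omega) h2
  omega

/-- within a decreasing stretch, values go down by exactly one -/
lemma run_val {π : Equiv.Perm (Fin n)} (h : Cnd π) {i j k : ℕ} (hij : i < j)
    (hval : pfun π j < pfun π i) (hik : i ≤ k) (hkj : k ≤ j) :
    pfun π k + (k - i) = pfun π i := by
  rcases Nat.eq_or_lt_of_le hik with he | hik'
  · subst he; simp
  rcases Nat.eq_or_lt_of_le hkj with he | hkj'
  · rw [he]; exact h i j hij hval
  have hki : pfun π k < pfun π i := by
    by_contra hc
    have hne : pfun π i ≠ pfun π k := fun he => (by omega : i ≠ k) (pfun_inj π he)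
    have h2 := h i j hij hval
    have h1 := h k j hkj' (by omega)
    omega
  exact h i k hik' hki

lemma run_step {π : Equiv.Perm (Fin n)} (h : Cnd π) {i j k : ℕ} (hij : i < j)
    (hval : pfun π j < pfun π i) (hik : i ≤ k) (hkj : k < j) :
    pfun π (k+1) + 1 = pfun π k := by
  have e1 := run_val h hij hval hik (by omega)
  have e2 := run_val h hij hval (le_trans hik (by omega)) (by omega : k + 1 ≤ j)
  omega

/-- chain of descents gives a strict decrease -/
lemma chain_desc {π : Equiv.Perm (Fin n)} {i j : ℕ} (hij : i ≤ j)
    (h : ∀ k, i ≤ k → k < j → pfun π (k+1) < pfun π k) :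
    pfun π j + (j - i) ≤ pfun π i := by
  induction j, hij using Nat.le_induction with
  | base => simp
  | succ m hm ih =>
    have h1 := h m hm (by omega)
    have h2 := ih (fun k hk1 hk2 => h k hk1 (by omega))
    omega

lemma pfun_asc {π : Equiv.Perm (Fin n)} {k : ℕ} (hk1 : k + 1 < n) (hnd : ¬ dsc π k) :
    pfun π k < pfun π (k+1) := by
  have hne : pfun π k ≠ pfun π (k+1) := fun he => (by omega : k ≠ k + 1) (pfun_inj π he)
  unfold dsc at hnd
  omega

lemma char1432 {π : Equiv.Perm (Fin n)} (h : Cnd π) :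
    ContainsPat π [1,4,3,2] ↔ ∃ j k : ℕ, k < j ∧ dsc π j ∧ dsc π (j+1) ∧ ¬ dsc π k := by
  constructor
  · rw [contains1432_iff]
    rintro ⟨a, b, c, d, hab, hbc, hcd, hdn, h1, h2, h3⟩
    have hbd : pfun π d < pfun π b := by omega
    have hd1 : dsc π b := by
      have := run_step h (by omega : b < d) hbd (le_refl b) (by omega)
      unfold dsc; omega
    have hd2 : dsc π (b+1) := by
      have := run_step h (by omega : b < d) hbd (by omega : b ≤ b+1) (by omega)
      unfold dsc; omega
    rcases Classical.em (∃ k, k < b ∧ ¬ dsc π k) with ⟨k, hk1, hk2⟩ | hno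
    · exact ⟨b, k, hk1, hd1, hd2, hk2⟩
    · exfalso
      push_neg at hno
      have hchain := chain_desc (π := π) (by omega : a ≤ d) (fun k hk1 hk2 => by
        rcases Nat.lt_or_ge k b with hkb | hkb
        · exact hno k hkb
        · have := run_step h (by omega : b < d) hbd hkb hk2
          omega)
      omega
  · rintro ⟨j, k, hkj, hdj, hdj1, hndk⟩
    have hj2 : j + 2 < n := dsc_lt hdj1
    have hasc : pfun π k < pfun π (k+1) := pfun_asc (by omega) hndk
    have hkval : pfun π k < pfun π (j+2) := by
      by_contra hc
      have hne : pfun π (j+2) ≠ pfun π k := fun he => (by omega : j+2 ≠ k) (pfun_inj π he)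
      have := run_step h (by omega : k < j + 2) (by omega) (le_refl k) (by omega)
      omega
    exact (contains1432_iff π).2 ⟨k, j, j+1, j+2, hkj, by omega, by omega, hj2,
      hkval, hdj1, hdj⟩

lemma char4321 {π : Equiv.Perm (Fin n)} (h : Cnd π) :
    ContainsPat π [4,3,2,1] ↔ ∃ j : ℕ, dsc π j ∧ dsc π (j+1) ∧ dsc π (j+2) := by
  constructor
  · rw [contains4321_iff]
    rintro ⟨a, b, c, d, hab, hbc, hcd, hdn, h1, h2, h3⟩
    have had : pfun π d < pfun π a := by omega
    refine ⟨a, ?_, ?_, ?_⟩ <;> unfold dsc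
    · have := run_step h (by omega : a < d) had (le_refl a) (by omega); omega
    · have := run_step h (by omega : a < d) had (by omega : a ≤ a+1) (by omega); omega
    · have := run_step h (by omega : a < d) had (by omega : a ≤ a+2) (by omega); omega
  · rintro ⟨j, hd0, hd1, hd2⟩
    have hj3 : j + 3 < n := by have := dsc_lt hd2; omega
    exact (contains4321_iff π).2 ⟨j, j+1, j+2, j+3, by omega, by omega, by omega, hj3,
      hd2, hd1, hd0⟩

lemma char21543 {π : Equiv.Perm (Fin n)} (h : Cnd π) :
    ContainsPat π [2,1,5,4,3] ↔ ∃ a k b : ℕ, a < k ∧ k < b ∧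
      dsc π a ∧ ¬ dsc π k ∧ dsc π b ∧ dsc π (b+1) := by
  constructor
  · rw [contains21543_iff]
    rintro ⟨a, b, c, d, e, hab, hbc, hcd, hde, hen, h1, h2, h3, h4⟩
    have hce : pfun π e < pfun π c := by omega
    have hda : dsc π a := by
      have := run_step h hab h1 (le_refl a) hab
      unfold dsc; omega
    have hdc : dsc π c := by
      have := run_step h (by omega : c < e) hce (le_refl c) (by omega)
      unfold dsc; omega
    have hdc1 : dsc π (c+1) := by
      have := run_step h (by omega : c < e) hce (by omega : c ≤ c+1) (by omega)
      unfold dsc; omega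
    rcases Classical.em (∃ k, a < k ∧ k < c ∧ ¬ dsc π k) with ⟨k, hk1, hk2, hk3⟩ | hno
    · exact ⟨a, k, c, hk1, hk2, hda, hk3, hdc, hdc1⟩
    · exfalso
      push_neg at hno
      have hchain := chain_desc (π := π) (by omega : a ≤ c) (fun k hk1 hk2 => by
        rcases Nat.eq_or_lt_of_le hk1 with he | hlt
        · rw [← he]; unfold dsc at hda; omega
        · have := hno k hlt hk2; unfold dsc at this; omega)
      omega
  · rintro ⟨a, k, b, hak, hkb, hda, hndk, hdb, hdb1⟩
    have hb2 : b + 2 < n := dsc_lt hdb1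
    have hasc : pfun π k < pfun π (k+1) := pfun_asc (by omega) hndk
    have hval : pfun π a < pfun π (b+2) := by
      by_contra hc
      have hne : pfun π (b+2) ≠ pfun π a := fun he => (by omega : b+2 ≠ a) (pfun_inj π he)
      have := run_step h (by omega : a < b + 2) (by omega) (by omega : a ≤ k) (by omega)
      omega
    exact (contains21543_iff π).2 ⟨a, a+1, b, b+1, b+2, by omega, by omega, by omega,
      by omega, hb2, hda, hval, hdb1, hdb⟩

lemma sOf_ex (b : ℕ → Bool) (k : ℕ) : ∃ s, s ≤ k ∧ ∀ i, s ≤ i → i < k → b i = true :=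
  ⟨k, le_refl k, fun i h1 h2 => absurd h1 (by omega)⟩

/-- first non-descent at or after `k` -/
noncomputable def eOf (b : ℕ → Bool) (k : ℕ) : ℕ :=
  @dite ℕ (∃ j, k ≤ j ∧ b j = false) (Classical.propDecidable _) (fun h => Nat.find h)
    (fun _ => 0)

/-- start of the descent run containing `k` -/
def sOf (b : ℕ → Bool) (k : ℕ) : ℕ :=
  Nat.find (sOf_ex b k)

lemma sOf_le (b : ℕ → Bool) (k : ℕ) : sOf b k ≤ k :=
  (Nat.find_spec (sOf_ex b k)).1

lemma sOf_run (b : ℕ → Bool) (k : ℕ) : ∀ i, sOf b k ≤ i → i < k → b i = true :=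
  (Nat.find_spec (sOf_ex b k)).2

lemma sOf_find_min' (b : ℕ → Bool) (k m : ℕ) (hm : m ≤ k ∧ ∀ i, m ≤ i → i < k → b i = true) :
    sOf b k ≤ m := Nat.find_min' (sOf_ex b k) hm

lemma sOf_min {b : ℕ → Bool} {k : ℕ} (h : sOf b k ≠ 0) : b (sOf b k - 1) = false := by
  have hmin := Nat.find_min (sOf_ex b k) (m := sOf b k - 1) (show sOf b k - 1 < sOf b k by omega)
  push_neg at hmin
  have hle := sOf_le b k
  obtain ⟨i, hi1, hi2, hi3⟩ := hmin (by omega)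
  rcases Nat.eq_or_lt_of_le hi1 with he | hlt
  · rw [he]; exact Bool.eq_false_iff.2 hi3
  · exact absurd (sOf_run b k i (by omega) hi2) hi3

section eOfLemmas

variable {b : ℕ → Bool} {k : ℕ} (hex : ∃ j, k ≤ j ∧ b j = false)
include hex

lemma eOf_ge : k ≤ eOf b k := by
  unfold eOf; rw [dif_pos hex]; exact (Nat.find_spec hex).1

lemma eOf_false : b (eOf b k) = false := by
  unfold eOf; rw [dif_pos hex]; exact (Nat.find_spec hex).2

lemma eOf_run : ∀ i, k ≤ i → i < eOf b k → b i = true := by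
  intro i h1 h2
  unfold eOf at h2; rw [dif_pos hex] at h2
  have := Nat.find_min hex h2
  push_neg at this
  simpa using this h1

lemma eOf_le_of {j : ℕ} (h1 : k ≤ j) (h2 : b j = false) : eOf b k ≤ j := by
  unfold eOf; rw [dif_pos hex]; exact Nat.find_min' hex ⟨h1, h2⟩

end eOfLemmas

lemma exF {b : ℕ → Bool} (hb : ∀ i, n - 1 ≤ i → b i = false) (k : ℕ) :
    ∃ j, k ≤ j ∧ b j = false :=
  ⟨max k (n-1), le_max_left _ _, hb _ (le_max_right _ _)⟩

section RunStructure

variable {b : ℕ → Bool} (hb : ∀ i, n - 1 ≤ i → b i = false)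
include hb

lemma eOf_le_pred (hn : 1 ≤ n) {k : ℕ} (hk : k < n) : eOf b k ≤ n - 1 :=
  eOf_le_of (exF hb k) (by omega) (hb _ (le_refl _))

lemma eOf_mono {a c : ℕ} (hac : a ≤ c) : eOf b a ≤ eOf b c :=
  eOf_le_of (exF hb a) (le_trans hac (eOf_ge (exF hb c)))
    (eOf_false (exF hb c))

lemma sOf_eq_of_eOf_eq {a c : ℕ} (hac : a ≤ c) (he : eOf b a = eOf b c) :
    sOf b a = sOf b c := by
  have hca : c ≤ eOf b a := he ▸ eOf_ge (exF hb c)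
  have htrue : ∀ i, a ≤ i → i < c → b i = true := fun i h1 h2 =>
    eOf_run (exF hb a) i h1 (by omega)
  have hsc_le : sOf b c ≤ a := by
    by_contra hgt
    have h0 : sOf b c ≠ 0 := by omega
    have := sOf_min h0
    have := htrue (sOf b c - 1) (by omega) (by have := sOf_le b c; omega)
    simp_all
  have h1 : sOf b a ≤ sOf b c := sOf_find_min' b a _
    ⟨hsc_le, fun i hi1 hi2 => sOf_run b c i hi1 (by omega)⟩
  have h2 : sOf b c ≤ sOf b a := sOf_find_min' b c _
    ⟨by omega, fun i hi1 hi2 => by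
      rcases Nat.lt_or_ge i a with h | h
      · exact sOf_run b a i hi1 h
      · exact htrue i h hi2⟩
  omega

lemma eOf_lt_sep {a c : ℕ} (hlt : eOf b a < eOf b c) : eOf b a < sOf b c := by
  have h1 : eOf b a < c := by
    by_contra hge
    exact absurd (eOf_le_of (exF hb c) (by omega) (eOf_false (exF hb a)))
      (by omega)
  by_contra hge
  have := sOf_run b c (eOf b a) (by omega) h1
  rw [eOf_false (exF hb a)] at this
  exact Bool.false_ne_true this

end RunStructure

/-- Boolean descent vector -/
def dscB (π : Equiv.Perm (Fin n)) : ℕ → Bool := fun i => decide (pfun π (i+1) < pfun π i)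

lemma dscB_iff (π : Equiv.Perm (Fin n)) (i : ℕ) : dscB π i = true ↔ dsc π i := by
  simp [dscB, dsc]

lemma dscB_false_iff (π : Equiv.Perm (Fin n)) (i : ℕ) : dscB π i = false ↔ ¬ dsc π i := by
  simp [dscB, dsc]

lemma dscB_zero (π : Equiv.Perm (Fin n)) : ∀ i, n - 1 ≤ i → dscB π i = false := by
  intro i hi
  rw [dscB_false_iff]
  exact not_dsc_last π hi

/-- run with exact value decrease -/
lemma run_exact {π : Equiv.Perm (Fin n)} (h : Cnd π) {s e : ℕ}
    (hd : ∀ i, s ≤ i → i < e → dsc π i) :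
    ∀ k, s ≤ k → k ≤ e → pfun π k + (k - s) = pfun π s := by
  intro k hk1 hk2
  induction k, hk1 using Nat.le_induction with
  | base => simp
  | succ m hm ih =>
    have hdm : dsc π m := hd m hm (by omega)
    have hc := h m (m+1) (by omega) hdm
    have := ih (by omega)
    omega

/-- master formula: a layered permutation is determined by its descent vector -/
lemma master {π : Equiv.Perm (Fin n)} (h : Cnd π) {k : ℕ} (hk : k < n) :
    pfun π k + k = sOf (dscB π) k + eOf (dscB π) k := by
  have hn : 1 ≤ n := by omega
  set b := dscB π with hbdef
  have hb : ∀ i, n - 1 ≤ i → b i = false := dscB_zero π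
  set s := sOf b k with hsdef
  set e := eOf b k with hedef
  have hse : s ≤ k := sOf_le b k
  have hke : k ≤ e := eOf_ge (exF hb k)
  have hen : e ≤ n - 1 := eOf_le_pred hb hn hk
  have hdrun : ∀ i, s ≤ i → i < e → dsc π i := by
    intro i h1 h2
    rcases Nat.lt_or_ge i k with hik | hik
    · exact (dscB_iff π i).1 (sOf_run b k i h1 hik)
    · exact (dscB_iff π i).1 (eOf_run (exF hb k) i hik h2)
  have hrun := run_exact h hdrun
  have hnde : ¬ dsc π e := (dscB_false_iff π e).1 (eOf_false (exF hb k))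
  have hA : ∀ j, j < s → pfun π j < pfun π e := by
    intro j hj
    by_contra hc
    have hne : pfun π e ≠ pfun π j := fun heq => (by omega : e ≠ j) (pfun_inj π heq)
    have hstep := run_step h (by omega : j < e) (by omega) (by omega : j ≤ s - 1) (by omega)
    have hds : dsc π (s-1) := by unfold dsc; omega
    have hmin := sOf_min (b := b) (k := k) (by omega)
    rw [hbdef, dscB_false_iff] at hmin
    exact hmin hds
  have hB : ∀ j, e < j → j < n → pfun π s < pfun π j := by
    intro j h1 h2
    by_contra hc
    have hne : pfun π j ≠ pfun π s := fun heq => (by omega : j ≠ s) (pfun_inj π heq)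
    have hstep := run_step h (by omega : s < j) (by omega) (by omega : s ≤ e) h1
    exact hnde (by unfold dsc; omega)
  have hes : pfun π e + (e - s) = pfun π s := hrun e (by omega) (le_refl e)
  have hc1 : (Finset.Iio (pfun π e)).card ≤ (Finset.Iio s).card := by
    apply Finset.card_le_card_of_injOn (pfun π.symm)
    · intro v hv
      rw [Finset.mem_coe, Finset.mem_Iio] at hv ⊢
      have hvn : v < n := by have := pfun_lt π (show e < n by omega); omega
      set k' := pfun π.symm v with hk'
      have hk'n : k' < n := pfun_lt π.symm hvn
      have hpk' : pfun π k' = v := pfun_symm_apply π hvn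
      by_contra hge
      rcases Nat.lt_or_ge e k' with hgt | hle'
      · have := hB k' hgt hk'n; omega
      · have := hrun k' (by omega) hle'; omega
    · intro x _ y _ heq; exact pfun_inj π.symm heq
  have hc2 : (Finset.Ioo (pfun π s) n).card ≤ (Finset.Ioo e n).card := by
    apply Finset.card_le_card_of_injOn (pfun π.symm)
    · intro v hv
      rw [Finset.mem_coe, Finset.mem_Ioo] at hv ⊢
      obtain ⟨hv1, hv2⟩ := hv
      set k' := pfun π.symm v with hk'
      have hk'n : k' < n := pfun_lt π.symm hv2
      have hpk' : pfun π k' = v := pfun_symm_apply π hv2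
      refine ⟨?_, hk'n⟩
      by_contra hge
      rcases Nat.lt_or_ge k' s with hlt | hle'
      · have := hA k' hlt; omega
      · have := hrun k' hle' (by omega); omega
    · intro x _ y _ heq; exact pfun_inj π.symm heq
  rw [Nat.card_Iio, Nat.card_Iio] at hc1
  rw [Nat.card_Ioo, Nat.card_Ioo] at hc2
  have hps : pfun π s < n := pfun_lt π (by omega)
  have hkk := hrun k hse hke
  omega

/-- layered permutations with equal descent vectors are equal -/
lemma perm_eq_of_dscB_eq {π σ : Equiv.Perm (Fin n)} (hπ : Cnd π) (hσ : Cnd σ)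
    (h : dscB π = dscB σ) : π = σ := by
  apply Equiv.ext
  intro x
  have h1 := master hπ x.2
  have h2 := master hσ x.2
  rw [h] at h1
  have hval : pfun π x = pfun σ x := by omega
  rw [pfun_fin, pfun_fin] at hval
  exact Fin.ext hval

section Construction

variable {b : ℕ → Bool} (hb : ∀ i, n - 1 ≤ i → b i = false)
include hb

lemma fF_lt {k : ℕ} (hk : k < n) : sOf b k + eOf b k - k < n := by
  have h1 := sOf_le b k
  have h2 := eOf_ge (exF hb k)
  have h3 := eOf_le_pred hb (by omega) hk
  omega

lemma fF_inj_aux {x y : ℕ} (hx : x < n) (hy : y < n) (hxy : x ≤ y)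
    (heq : sOf b x + eOf b x - x = sOf b y + eOf b y - y) : x = y := by
  have hsx := sOf_le b x
  have hex := eOf_ge (exF hb x)
  have hsy := sOf_le b y
  have hey := eOf_ge (exF hb y)
  rcases Nat.eq_or_lt_of_le (eOf_mono hb hxy) with he | hlt
  · have hs := sOf_eq_of_eOf_eq hb hxy he
    omega
  · have hsep := eOf_lt_sep hb hlt
    omega

end Construction

/-- the layered permutation with a given descent vector -/
noncomputable def permOf (b : ℕ → Bool) (hb : ∀ i, n - 1 ≤ i → b i = false) :
    Equiv.Perm (Fin n) :=
  Equiv.ofBijective (fun x : Fin n => (⟨sOf b x + eOf b x - x, fF_lt hb x.2⟩ : Fin n))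
    (Finite.injective_iff_bijective.1 (fun x y hxy => by
      have hv : sOf b x + eOf b x - (x : ℕ) = sOf b y + eOf b y - (y : ℕ) :=
        congrArg Fin.val hxy
      rcases Nat.le_total (x : ℕ) (y : ℕ) with hle | hle
      · exact Fin.ext (fF_inj_aux hb x.2 y.2 hle hv)
      · exact Fin.ext (fF_inj_aux hb y.2 x.2 hle hv.symm).symm))

lemma pfun_permOf {b : ℕ → Bool} (hb : ∀ i, n - 1 ≤ i → b i = false) {k : ℕ} (hk : k < n) :
    pfun (permOf b hb) k + k = sOf b k + eOf b k := by
  rw [pfun_def _ hk]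
  have h1 := sOf_le b k
  have h2 := eOf_ge (exF hb k)
  have : ((permOf b hb ⟨k, hk⟩ : Fin n) : ℕ) = sOf b k + eOf b k - k := rfl
  omega

lemma cnd_permOf {b : ℕ → Bool} (hb : ∀ i, n - 1 ≤ i → b i = false) :
    Cnd (permOf b hb) := by
  intro i j hij hval
  rcases Nat.lt_or_ge j n with hjn | hjn
  · have hin : i < n := by omega
    have hi := pfun_permOf hb hin
    have hj := pfun_permOf hb hjn
    have hsi := sOf_le b i
    have hei := eOf_ge (exF hb i)
    have hsj := sOf_le b j
    have hej := eOf_ge (exF hb j)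
    rcases Nat.eq_or_lt_of_le (eOf_mono hb (by omega : i ≤ j)) with he | hlt
    · have hs := sOf_eq_of_eOf_eq hb (by omega : i ≤ j) he
      omega
    · have hsep := eOf_lt_sep hb hlt
      omega
  · exfalso
    rw [pfun_big _ (by omega)] at hval
    rcases Nat.lt_or_ge i n with hin | hin
    · have := pfun_lt (permOf b hb) hin; omega
    · rw [pfun_big _ (by omega)] at hval; omega

lemma dscB_permOf {b : ℕ → Bool} (hb : ∀ i, n - 1 ≤ i → b i = false) :
    dscB (permOf b hb) = b := by
  funext i
  rcases Nat.lt_or_ge i (n-1) with hi | hi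
  · have hin : i < n := by omega
    have hi1n : i + 1 < n := by omega
    have hvi := pfun_permOf hb hin
    have hvi1 := pfun_permOf hb hi1n
    have hsi := sOf_le b i
    have hei := eOf_ge (exF hb i)
    have hsi1 := sOf_le b (i+1)
    have hei1 := eOf_ge (exF hb (i+1))
    cases hbi : b i with
    | true =>
      have he1 : eOf b i = eOf b (i+1) := by
        have hgt : i + 1 ≤ eOf b i := by
          rcases Nat.eq_or_lt_of_le hei with he | h
          · exfalso
            have := eOf_false (exF hb i)
            rw [← he, hbi] at this
            simp at this
          · omega
        have h1 : eOf b (i+1) ≤ eOf b i :=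
          eOf_le_of (exF hb (i+1)) hgt (eOf_false (exF hb i))
        have h2 := eOf_mono hb (by omega : i ≤ i + 1)
        omega
      have hs1 : sOf b i = sOf b (i+1) := sOf_eq_of_eOf_eq hb (by omega) he1
      have : dsc (permOf b hb) i := by
        unfold dsc
        omega
      rw [(dscB_iff _ i).2 this]
    | false =>
      have he0 : eOf b i = i := by
        have := eOf_le_of (exF hb i) (le_refl i) hbi
        omega
      have hs10 : sOf b (i+1) = i + 1 := by
        by_contra hne
        have hlt : sOf b (i+1) ≤ i := by omega
        have := sOf_run b (i+1) i hlt (by omega)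
        rw [hbi] at this
        exact Bool.false_ne_true this
      have : ¬ dsc (permOf b hb) i := by
        unfold dsc
        omega
      rw [(dscB_false_iff _ i).2 this]
  · rw [hb i hi, (dscB_false_iff _ i).2 (not_dsc_last (permOf b hb) hi)]

open scoped Classical

/-- all boolean lists of length m -/
def allB : ℕ → Finset (List Bool)
  | 0 => {[]}
  | m+1 => (allB m).image (List.cons true) ∪ (allB m).image (List.cons false)

lemma mem_allB {m : ℕ} {l : List Bool} : l ∈ allB m ↔ l.length = m := by
  induction m generalizing l with
  | zero => cases l <;> simp [allB]
  | succ m ih =>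
    cases l with
    | nil => simp [allB]
    | cons x t =>
      simp only [allB, Finset.mem_union, Finset.mem_image, List.length_cons]
      constructor
      · rintro (⟨a, ha, he⟩ | ⟨a, ha, he⟩) <;>
          (cases he; simp [ih.1 ha])
      · intro h
        cases x
        · exact Or.inr ⟨t, ih.2 (by omega), rfl⟩
        · exact Or.inl ⟨t, ih.2 (by omega), rfl⟩

def fromList (l : List Bool) : ℕ → Bool := fun i => l.getD i false

def consF (x : Bool) (b : ℕ → Bool) : ℕ → Bool := fun i =>
  match i with
  | 0 => x
  | Nat.succ i => b i

@[simp] lemma consF_zero (x : Bool) (b : ℕ → Bool) : consF x b 0 = x := rfl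
@[simp] lemma consF_succ (x : Bool) (b : ℕ → Bool) (i : ℕ) : consF x b (i+1) = b i := rfl

lemma fromList_cons (x : Bool) (l : List Bool) :
    fromList (x :: l) = consF x (fromList l) := by
  funext i
  cases i <;> rfl

/-- two adjacent descents exist -/
def BVN (b : ℕ → Bool) : Prop := ∃ j, b j = true ∧ b (j+1) = true
/-- adjacent descents preceded by a non-descent -/
def BV1 (b : ℕ → Bool) : Prop :=
  ∃ j k, k < j ∧ b j = true ∧ b (j+1) = true ∧ b k = false
/-- three adjacent descents -/
def BV2 (b : ℕ → Bool) : Prop := ∃ j, b j = true ∧ b (j+1) = true ∧ b (j+2) = true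
/-- descent, non-descent, two adjacent descents -/
def BV3 (b : ℕ → Bool) : Prop :=
  ∃ a k c, a < k ∧ k < c ∧ b a = true ∧ b k = false ∧ b c = true ∧ b (c+1) = true

lemma BVN_of_BV1 {b : ℕ → Bool} (h : BV1 b) : BVN b := by
  obtain ⟨j, k, _, h1, h2, _⟩ := h; exact ⟨j, h1, h2⟩
lemma BVN_of_BV2 {b : ℕ → Bool} (h : BV2 b) : BVN b := by
  obtain ⟨j, h1, h2, _⟩ := h; exact ⟨j, h1, h2⟩
lemma BVN_of_BV3 {b : ℕ → Bool} (h : BV3 b) : BVN b := by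
  obtain ⟨a, k, c, _, _, _, _, h1, h2⟩ := h; exact ⟨c, h1, h2⟩

lemma VN_cons (x : Bool) (b : ℕ → Bool) :
    BVN (consF x b) ↔ (x = true ∧ b 0 = true) ∨ BVN b := by
  constructor
  · rintro ⟨(_|j), h1, h2⟩
    · exact Or.inl ⟨h1, h2⟩
    · exact Or.inr ⟨j, h1, h2⟩
  · rintro (⟨h1, h2⟩ | ⟨j, h1, h2⟩)
    · exact ⟨0, h1, h2⟩
    · exact ⟨j+1, h1, h2⟩

lemma V1_cons_true (b : ℕ → Bool) : BV1 (consF true b) ↔ BV1 b := by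
  constructor
  · rintro ⟨(_|j), (_|k), hkj, h1, h2, h3⟩
    · omega
    · omega
    · simp at h3
    · exact ⟨j, k, by omega, h1, h2, h3⟩
  · rintro ⟨j, k, hkj, h1, h2, h3⟩
    exact ⟨j+1, k+1, by omega, h1, h2, h3⟩

lemma V1_cons_false (b : ℕ → Bool) : BV1 (consF false b) ↔ BVN b := by
  constructor
  · rintro ⟨(_|j), k, hkj, h1, h2, h3⟩
    · omega
    · exact ⟨j, h1, h2⟩
  · rintro ⟨j, h1, h2⟩
    exact ⟨j+1, 0, by omega, h1, h2, rfl⟩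

lemma V2_cons (x : Bool) (b : ℕ → Bool) :
    BV2 (consF x b) ↔ (x = true ∧ b 0 = true ∧ b 1 = true) ∨ BV2 b := by
  constructor
  · rintro ⟨(_|j), h1, h2, h3⟩
    · exact Or.inl ⟨h1, h2, h3⟩
    · exact Or.inr ⟨j, h1, h2, h3⟩
  · rintro (⟨h1, h2, h3⟩ | ⟨j, h1, h2, h3⟩)
    · exact ⟨0, h1, h2, h3⟩
    · exact ⟨j+1, h1, h2, h3⟩

lemma V3_cons_true (b : ℕ → Bool) : BV3 (consF true b) ↔ BV1 b ∨ BV3 b := by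
  constructor
  · rintro ⟨(_|a), (_|k), (_|c), hak, hkc, h1, h2, h3, h4⟩ <;> try omega
    · exact Or.inl ⟨c, k, by omega, h3, h4, h2⟩
    · exact Or.inr ⟨a, k, c, by omega, by omega, h1, h2, h3, h4⟩
  · rintro (⟨j, k, hkj, h1, h2, h3⟩ | ⟨a, k, c, hak, hkc, h1, h2, h3, h4⟩)
    · exact ⟨0, k+1, j+1, by omega, by omega, rfl, h3, h1, h2⟩
    · exact ⟨a+1, k+1, c+1, by omega, by omega, h1, h2, h3, h4⟩

lemma V3_cons_false (b : ℕ → Bool) : BV3 (consF false b) ↔ BV3 b := by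
  constructor
  · rintro ⟨(_|a), (_|k), (_|c), hak, hkc, h1, h2, h3, h4⟩ <;> try omega
    · simp at h1
    · exact ⟨a, k, c, by omega, by omega, h1, h2, h3, h4⟩
  · rintro ⟨a, k, c, hak, hkc, h1, h2, h3, h4⟩
    exact ⟨a+1, k+1, c+1, by omega, by omega, h1, h2, h3, h4⟩

/-- count of boolean vectors of length `m` satisfying `P` -/
noncomputable def cnt (P : (ℕ → Bool) → Prop) (m : ℕ) : ℕ :=
  ((allB m).filter (fun l => P (fromList l))).card

lemma cnt_congr {P Q : (ℕ → Bool) → Prop} (h : ∀ b, P b ↔ Q b) (m : ℕ) :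
    cnt P m = cnt Q m := by
  unfold cnt
  congr 1
  apply Finset.filter_congr
  intro l _
  exact h _

lemma cnt_succ (P : (ℕ → Bool) → Prop) (m : ℕ) :
    cnt P (m+1) = cnt (fun b => P (consF true b)) m + cnt (fun b => P (consF false b)) m := by
  unfold cnt
  simp only [allB]
  rw [Finset.filter_union, Finset.card_union_of_disjoint]
  · congr 1 <;> (rw [Finset.filter_image, Finset.card_image_of_injective _ (List.cons_injective)]
      <;> (congr 1; apply Finset.filter_congr; intro l _; rw [fromList_cons]))
  · refine Finset.disjoint_filter_filter ?_
    rw [Finset.disjoint_left]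
    rintro l hl1 hl2
    obtain ⟨a, _, ha⟩ := Finset.mem_image.1 hl1
    obtain ⟨c, _, hc⟩ := Finset.mem_image.1 hl2
    rw [← ha] at hc
    simp at hc

def P_g (b : ℕ → Bool) : Prop := ¬ BVN b
def P_h (b : ℕ → Bool) : Prop := ¬ BVN b ∧ b 0 = false
def P_1 (b : ℕ → Bool) : Prop := ¬ BV1 b
def P_2 (b : ℕ → Bool) : Prop := ¬ BV2 b ∧ ¬ BV3 b
def P_3 (b : ℕ → Bool) : Prop := ¬ (b 0 = true ∧ b 1 = true) ∧ ¬ BV1 b ∧ ¬ BV2 b ∧ ¬ BV3 b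
def P_4 (b : ℕ → Bool) : Prop := b 0 = false ∧ ¬ BV1 b ∧ ¬ BV2 b ∧ ¬ BV3 b

lemma fromList_nil : fromList [] = fun _ => false := rfl

lemma cnt_zero_of {P : (ℕ → Bool) → Prop} (h : P (fromList [])) : cnt P 0 = 1 := by
  simp [cnt, allB, Finset.filter_singleton, h]

lemma cnt_false (m : ℕ) : cnt (fun _ => False) m = 0 := by
  simp [cnt]

lemma not_BVN_nil : ¬ BVN (fromList []) := by
  rintro ⟨j, h, -⟩; simp [fromList] at h

lemma not_BV1_nil : ¬ BV1 (fromList []) := by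
  rintro ⟨j, k, -, h, -⟩; simp [fromList] at h

lemma not_BV2_nil : ¬ BV2 (fromList []) := by
  rintro ⟨j, h, -⟩; simp [fromList] at h

lemma not_BV3_nil : ¬ BV3 (fromList []) := by
  rintro ⟨a, k, c, -, -, h, -⟩; simp [fromList] at h

lemma step_g (m : ℕ) : cnt P_g (m+1) = cnt P_h m + cnt P_g m := by
  rw [cnt_succ]
  congr 1
  · exact cnt_congr (fun b => by simp [P_g, P_h, VN_cons]; tauto) m
  · exact cnt_congr (fun b => by simp [P_g, VN_cons]) m

lemma step_h (m : ℕ) : cnt P_h (m+1) = cnt P_g m := by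
  rw [cnt_succ]
  have h1 : cnt (fun b => P_h (consF true b)) m = 0 := by
    rw [cnt_congr (fun b => ?_) m, cnt_false]
    simp [P_h]
  have h2 : cnt (fun b => P_h (consF false b)) m = cnt P_g m :=
    cnt_congr (fun b => by simp [P_h, P_g, VN_cons]) m
  omega

lemma step_1 (m : ℕ) : cnt P_1 (m+1) = cnt P_1 m + cnt P_g m := by
  rw [cnt_succ]
  congr 1
  · exact cnt_congr (fun b => by simp [P_1, V1_cons_true]) m
  · exact cnt_congr (fun b => by simp [P_1, P_g, V1_cons_false]) m

lemma step_2 (m : ℕ) : cnt P_2 (m+1) = cnt P_3 m + cnt P_2 m := by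
  rw [cnt_succ]
  congr 1
  · exact cnt_congr (fun b => by simp [P_2, P_3, V2_cons, V3_cons_true]; tauto) m
  · exact cnt_congr (fun b => by simp [P_2, V2_cons, V3_cons_false]) m

lemma step_3 (m : ℕ) : cnt P_3 (m+1) = cnt P_4 m + cnt P_g m := by
  rw [cnt_succ]
  congr 1
  · exact cnt_congr (fun b => by cases h0 : b 0 <;> simp [P_3, P_4, V1_cons_true, V2_cons, V3_cons_true, h0] <;> tauto) m
  · refine cnt_congr (fun b => ?_) m
    simp only [P_3, P_g, consF_zero, consF_succ, V1_cons_false, V2_cons, V3_cons_false]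
    constructor
    · rintro ⟨-, h, -, -⟩; exact h
    · intro h
      exact ⟨by simp, h, by
        rintro (⟨h0, -⟩ | h2)
        · simp at h0
        · exact h (BVN_of_BV2 h2), fun h3 => h (BVN_of_BV3 h3)⟩

lemma step_4 (m : ℕ) : cnt P_4 (m+1) = cnt P_g m := by
  rw [cnt_succ]
  have h1 : cnt (fun b => P_4 (consF true b)) m = 0 := by
    rw [cnt_congr (fun b => ?_) m, cnt_false]
    simp [P_4]
  have h2 : cnt (fun b => P_4 (consF false b)) m = cnt P_g m := by
    refine cnt_congr (fun b => ?_) m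
    simp only [P_4, P_g, consF_zero, consF_succ, V1_cons_false, V2_cons, V3_cons_false]
    constructor
    · rintro ⟨-, h, -, -⟩; exact h
    · intro h
      exact ⟨trivial, h, by
        rintro (⟨h0, -⟩ | h2)
        · simp at h0
        · exact h (BVN_of_BV2 h2), fun h3 => h (BVN_of_BV3 h3)⟩
  omega

lemma c4_eq_h (m : ℕ) : cnt P_4 m = cnt P_h m := by
  cases m with
  | zero =>
    rw [cnt_zero_of, cnt_zero_of]
    · exact ⟨not_BVN_nil, rfl⟩
    · exact ⟨rfl, not_BV1_nil, not_BV2_nil, not_BV3_nil⟩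
  | succ m => rw [step_4, step_h]

lemma c3_eq_g (m : ℕ) : cnt P_3 m = cnt P_g m := by
  cases m with
  | zero =>
    rw [cnt_zero_of, cnt_zero_of]
    · exact not_BVN_nil
    · exact ⟨by simp [fromList], not_BV1_nil, not_BV2_nil, not_BV3_nil⟩
  | succ m => rw [step_3, step_g, c4_eq_h]

lemma c1_eq_c2 (m : ℕ) : cnt P_1 m = cnt P_2 m := by
  induction m with
  | zero =>
    rw [cnt_zero_of not_BV1_nil, cnt_zero_of ⟨not_BV2_nil, not_BV3_nil⟩]
  | succ m ih => rw [step_1, step_2, ih, c3_eq_g, Nat.add_comm]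

lemma fromList_ofFn (π : Equiv.Perm (Fin n)) :
    fromList (List.ofFn (fun i : Fin (n-1) => dscB π i)) = dscB π := by
  funext i
  unfold fromList
  rcases Nat.lt_or_ge i (n-1) with hi | hi
  · rw [List.getD_eq_getElem _ _ (by simpa using hi), List.getElem_ofFn]
  · rw [List.getD_eq_default _ _ (by simpa using hi), dscB_zero π i hi]

lemma ofFn_fromList {l : List Bool} (hl : l.length = n - 1) :
    List.ofFn (fun i : Fin (n-1) => fromList l i) = l := by
  apply List.ext_getElem (by simp [hl])
  intro i h1 h2
  rw [List.getElem_ofFn]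
  unfold fromList
  rw [List.getD_eq_getElem _ _ h2]

lemma fromList_pad {l : List Bool} (hl : l.length = n - 1) :
    ∀ i, n - 1 ≤ i → fromList l i = false := by
  intro i hi
  unfold fromList
  rw [List.getD_eq_default _ _ (by omega)]

lemma cnt_perm (P : (ℕ → Bool) → Prop) :
    {π : Equiv.Perm (Fin n) | Cnd π ∧ P (dscB π)}.ncard = cnt P (n-1) := by
  have hset : {π : Equiv.Perm (Fin n) | Cnd π ∧ P (dscB π)} =
      ↑(Finset.univ.filter (fun π : Equiv.Perm (Fin n) => Cnd π ∧ P (dscB π))) := by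
    ext π; simp
  rw [hset, Set.ncard_coe_finset]
  unfold cnt
  apply Finset.card_bij (fun π _ => List.ofFn (fun i : Fin (n-1) => dscB π i))
  · intro π hπ
    rw [Finset.mem_filter] at hπ ⊢
    refine ⟨mem_allB.2 (by simp), ?_⟩
    rw [fromList_ofFn]
    exact hπ.2.2
  · intro π hπ σ hσ heq
    rw [Finset.mem_filter] at hπ hσ
    have hd : dscB π = dscB σ := by
      rw [← fromList_ofFn π, ← fromList_ofFn σ, heq]
    exact perm_eq_of_dscB_eq hπ.2.1 hσ.2.1 hd
  · intro l hl
    rw [Finset.mem_filter] at hl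
    obtain ⟨hall, hP⟩ := hl
    have hlen : l.length = n - 1 := mem_allB.1 hall
    have hpad := fromList_pad hlen
    refine ⟨permOf (fromList l) hpad, ?_, ?_⟩
    · rw [Finset.mem_filter]
      exact ⟨Finset.mem_univ _, cnd_permOf hpad, by rw [dscB_permOf hpad]; exact hP⟩
    · rw [show dscB (permOf (fromList l) hpad) = fromList l from dscB_permOf hpad]
      exact ofFn_fromList hlen


end AuxLayered

theorem stmt4 (n : ℕ) (hn : 1 ≤ n) :
    {π : Equiv.Perm (Fin n) | AvoidsAll π [[2,3,1],[3,1,2],[1,4,3,2]]}.ncard =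
    {π : Equiv.Perm (Fin n) | AvoidsAll π [[2,3,1],[3,1,2],[4,3,2,1],[2,1,5,4,3]]}.ncard := by
  have e1 : {π : Equiv.Perm (Fin n) | AvoidsAll π [[2,3,1],[3,1,2],[1,4,3,2]]} =
      {π : Equiv.Perm (Fin n) | Cnd π ∧ P_1 (dscB π)} := by
    ext π
    simp only [Set.mem_setOf_eq, AvoidsAll, List.mem_cons, List.mem_singleton]
    constructor
    · intro h
      have h231 := h [2,3,1] (by simp)
      have h312 := h [3,1,2] (by simp)
      have h1432 := h [1,4,3,2] (by simp)
      have hC : Cnd π := cnd_of_avoids h231 h312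
      refine ⟨hC, ?_⟩
      rintro ⟨j, k, hkj, hj, hj1, hk⟩
      exact h1432 ((char1432 hC).2 ⟨j, k, hkj, (dscB_iff π j).1 hj, (dscB_iff π (j+1)).1 hj1,
        (dscB_false_iff π k).1 hk⟩)
    · rintro ⟨hC, hB⟩ p hp
      rcases hp with h | h | h | h
      · rw [h]; exact not_contains231 hC
      · rw [h]; exact not_contains312 hC
      case inr.inr.inr => simp at h
      · rw [h]
        intro hcont
        obtain ⟨j, k, hkj, hj, hj1, hk⟩ := (char1432 hC).1 hcont
        exact hB ⟨j, k, hkj, (dscB_iff π j).2 hj, (dscB_iff π (j+1)).2 hj1,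
          (dscB_false_iff π k).2 hk⟩
  have e2 : {π : Equiv.Perm (Fin n) | AvoidsAll π [[2,3,1],[3,1,2],[4,3,2,1],[2,1,5,4,3]]} =
      {π : Equiv.Perm (Fin n) | Cnd π ∧ P_2 (dscB π)} := by
    ext π
    simp only [Set.mem_setOf_eq, AvoidsAll, List.mem_cons, List.mem_singleton]
    constructor
    · intro h
      have h231 := h [2,3,1] (by simp)
      have h312 := h [3,1,2] (by simp)
      have h4321 := h [4,3,2,1] (by simp)
      have h21543 := h [2,1,5,4,3] (by simp)
      have hC : Cnd π := cnd_of_avoids h231 h312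
      refine ⟨hC, ?_, ?_⟩
      · rintro ⟨j, hj, hj1, hj2⟩
        exact h4321 ((char4321 hC).2 ⟨j, (dscB_iff π j).1 hj, (dscB_iff π (j+1)).1 hj1,
          (dscB_iff π (j+2)).1 hj2⟩)
      · rintro ⟨a, k, c, hak, hkc, ha, hk, hc, hc1⟩
        exact h21543 ((char21543 hC).2 ⟨a, k, c, hak, hkc, (dscB_iff π a).1 ha,
          (dscB_false_iff π k).1 hk, (dscB_iff π c).1 hc, (dscB_iff π (c+1)).1 hc1⟩)
    · rintro ⟨hC, hB2, hB3⟩ p hp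
      rcases hp with h | h | h | h | h
      · rw [h]; exact not_contains231 hC
      case inr.inr.inr.inr => simp at h
      · rw [h]; exact not_contains312 hC
      · rw [h]
        intro hcont
        obtain ⟨j, hj, hj1, hj2⟩ := (char4321 hC).1 hcont
        exact hB2 ⟨j, (dscB_iff π j).2 hj, (dscB_iff π (j+1)).2 hj1, (dscB_iff π (j+2)).2 hj2⟩
      · rw [h]
        intro hcont
        obtain ⟨a, k, c, hak, hkc, ha, hk, hc, hc1⟩ := (char21543 hC).1 hcont
        exact hB3 ⟨a, k, c, hak, hkc, (dscB_iff π a).2 ha, (dscB_false_iff π k).2 hk,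
          (dscB_iff π c).2 hc, (dscB_iff π (c+1)).2 hc1⟩
  rw [e1, e2, cnt_perm P_1, cnt_perm P_2, c1_eq_c2]
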